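/- Let K be a field, let k ≥ 1 and ν ≥ 0 be natural numbers, and let x = (x_0,…,x_ν) and y = (y_0,…,y_ν) be families of elements of K. Then the k × 2(ν+k) block matrix B = [W(x) | W(y)] has rank k if and only if not all of the elements x_0,…,x_ν,y_0,…,y_ν are zero (and B = 0 when they are all zero). -/

import Mathlib

/-- The wide Toeplitz band matrix `W(x)`: the `k × (ν+k)` matrix with
`W(x)[i,j] = x (j-i)` when `i ≤ j ≤ i + ν` and `0` otherwise. -/
def Wmat {K : Type*} [Field K] (k ν : ℕ) (x : Fin (ν + 1) → K) :
    Matrix (Fin k) (Fin (ν + k)) K :=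
  Matrix.of fun i j =>
    if h : (i : ℕ) ≤ (j : ℕ) ∧ (j : ℕ) ≤ (i : ℕ) + ν then
      x ⟨(j : ℕ) - (i : ℕ), by omega⟩
    else 0

lemma Wmat_zero {K : Type*} [Field K] (k ν : ℕ) :
    Wmat (K := K) k ν 0 = 0 := by
  ext i j
  simp only [Wmat, Matrix.of_apply]
  split <;> simp

/-- If `x ≠ 0`, then `W(x)` has full row rank `k`. -/
lemma Wmat_rank {K : Type*} [Field K] (k ν : ℕ) (x : Fin (ν + 1) → K)
    (hx : x ≠ 0) : (Wmat k ν x).rank = k := by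
  classical
  -- find the minimal index d with x d ≠ 0
  have hex : ∃ n : ℕ, ∃ h : n < ν + 1, x ⟨n, h⟩ ≠ 0 := by
    by_contra h
    push_neg at h
    apply hx
    funext i
    simpa using h i i.2
  set D := Nat.find hex with hD
  obtain ⟨hd, hxd⟩ := Nat.find_spec hex
  have hmin : ∀ m (hm : m < ν + 1), m < D → x ⟨m, hm⟩ = 0 := by
    intro m hm hlt
    by_contra h
    exact Nat.find_min hex hlt ⟨hm, h⟩
  -- selector matrix P picking columns i + D
  set P : Matrix (Fin (ν + k)) (Fin k) K :=
    Matrix.of (fun j i => if (j : ℕ) = (i : ℕ) + D then 1 else 0) with hP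
  set M : Matrix (Fin k) (Fin k) K := Wmat k ν x * P with hM
  have hMentry : ∀ i i' : Fin k, M i i' = Wmat k ν x i ⟨(i' : ℕ) + D, by omega⟩ := by
    intro i i'
    rw [hM, Matrix.mul_apply]
    rw [Finset.sum_eq_single (⟨(i' : ℕ) + D, by omega⟩ : Fin (ν + k))]
    · simp [hP]
    · intro b _ hb
      have : (b : ℕ) ≠ (i' : ℕ) + D := by
        intro h; apply hb; exact Fin.ext h
      simp [hP, this]
    · simp
  -- M is upper triangular with nonzero diagonal
  have hdiag : ∀ i : Fin k, M i i = x ⟨D, hd⟩ := by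
    intro i
    rw [hMentry]
    have h1 : (i : ℕ) ≤ (i : ℕ) + D ∧ (i : ℕ) + D ≤ (i : ℕ) + ν := ⟨by omega, by omega⟩
    simp only [Wmat, Matrix.of_apply, dif_pos h1]
    exact congrArg x (Fin.ext (by simp))
  have htri : M.BlockTriangular id := by
    intro i i' hlt
    simp only [id_eq] at hlt
    rw [hMentry]
    simp only [Wmat, Matrix.of_apply]
    split
    · rename_i h
      apply hmin
      omega
    · rfl
  have hdet : M.det ≠ 0 := by
    rw [Matrix.det_of_upperTriangular htri]
    simp only [hdiag]
    rw [Finset.prod_const]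
    exact pow_ne_zero _ hxd
  have hMrank : M.rank = k := by
    have := Matrix.rank_of_isUnit M ((Matrix.isUnit_iff_isUnit_det M).mpr (Ne.isUnit hdet))
    simpa using this
  have h1 : M.rank ≤ (Wmat k ν x).rank := Matrix.rank_mul_le_left _ _
  have h2 : (Wmat k ν x).rank ≤ k := by
    simpa using (Wmat k ν x).rank_le_card_height
  omega

theorem stmt4 {K : Type*} [Field K] (k ν : ℕ) (hk : 1 ≤ k)
    (x y : Fin (ν + 1) → K) :
    ((Matrix.fromCols (Wmat k ν x) (Wmat k ν y)).rank = k ↔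
        ¬(x = 0 ∧ y = 0)) ∧
      (x = 0 ∧ y = 0 → Matrix.fromCols (Wmat k ν x) (Wmat k ν y) = 0) := by
  classical
  have hzero : x = 0 ∧ y = 0 → Matrix.fromCols (Wmat k ν x) (Wmat k ν y) = 0 := by
    rintro ⟨hx, hy⟩
    rw [hx, hy, Wmat_zero, Matrix.fromCols_zero]
  refine ⟨⟨?_, ?_⟩, hzero⟩
  · intro hrank h
    rw [hzero h] at hrank
    simp [Matrix.rank_zero] at hrank
    omega
  · intro h
    have h' : x ≠ 0 ∨ y ≠ 0 := by tauto
    set B := Matrix.fromCols (Wmat k ν x) (Wmat k ν y) with hB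
    have hle : B.rank ≤ k := by simpa using B.rank_le_card_height
    have hge : k ≤ B.rank := by
      rcases h' with hx | hy
      · have : B * Matrix.fromRows (1 : Matrix (Fin (ν + k)) (Fin (ν + k)) K) (0 : Matrix (Fin (ν + k)) (Fin (ν + k)) K) = Wmat k ν x := by
          rw [hB, Matrix.fromCols_mul_fromRows]
          simp
        calc k = (Wmat k ν x).rank := (Wmat_rank k ν x hx).symm
          _ = (B * Matrix.fromRows (1 : Matrix (Fin (ν + k)) (Fin (ν + k)) K) (0 : Matrix (Fin (ν + k)) (Fin (ν + k)) K)).rank := by rw [this]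
          _ ≤ B.rank := Matrix.rank_mul_le_left _ _
      · have : B * Matrix.fromRows (0 : Matrix (Fin (ν + k)) (Fin (ν + k)) K) (1 : Matrix (Fin (ν + k)) (Fin (ν + k)) K) = Wmat k ν y := by
          rw [hB, Matrix.fromCols_mul_fromRows]
          simp
        calc k = (Wmat k ν y).rank := (Wmat_rank k ν y hy).symm
          _ = (B * Matrix.fromRows (0 : Matrix (Fin (ν + k)) (Fin (ν + k)) K) (1 : Matrix (Fin (ν + k)) (Fin (ν + k)) K)).rank := by rw [this]
          _ ≤ B.rank := Matrix.rank_mul_le_left _ _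
    omega
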